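/- If a family 𝒯 of complete L-theories satisfies RS(𝒯) = ∞, then the cardinality of Cl_E(𝒯) is at least 2^ℵ₀. -/

import Mathlib

open FirstOrder Language Cardinal Set

universe u v w

variable {L : FirstOrder.Language.{u, v}}

/-- A complete theory: a satisfiable set of sentences containing each sentence or its
negation (`Theory.IsMaximal` in Mathlib). -/
abbrev CTheory (L : FirstOrder.Language.{u, v}) : Type max u v :=
  {T : L.Theory // T.IsMaximal}

/-- The neighbourhood `𝒯_φ = {T ∈ 𝒯 | φ ∈ T}`. -/
def nbhd (𝒯 : Set (CTheory L)) (φ : L.Sentence) : Set (CTheory L) :=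
  {T | T ∈ 𝒯 ∧ φ ∈ T.1}

/-- `T` is an accumulation point of `𝒯` if for every sentence `φ ∈ T` the set `𝒯_φ` is
infinite. -/
def IsAccPoint (𝒯 : Set (CTheory L)) (T : CTheory L) : Prop :=
  ∀ φ : L.Sentence, φ ∈ T.1 → (nbhd 𝒯 φ).Infinite

/-- The `E`-closure of `𝒯`: `𝒯` together with all its accumulation points. -/
def ClE (𝒯 : Set (CTheory L)) : Set (CTheory L) :=
  𝒯 ∪ {T | IsAccPoint 𝒯 T}

/-- The `e`-spectrum of `𝒯`: the cardinality of the set of accumulation points of `𝒯`. -/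
noncomputable def eSp (𝒯 : Set (CTheory L)) : Cardinal :=
  Cardinal.mk {T : CTheory L // IsAccPoint 𝒯 T}

/-- Two sentences are inconsistent if `{φ, ψ}` is unsatisfiable. -/
def Inconsistent (φ ψ : L.Sentence) : Prop :=
  ¬ FirstOrder.Language.Theory.IsSatisfiable ({φ, ψ} : L.Theory)

open Classical in
/-- `RSge α 𝒯` says `RS(𝒯) ≥ α`: `RS(𝒯) ≥ 0` iff `𝒯 ≠ ∅`; `RS(𝒯) ≥ 1` iff `𝒯` is infinite;
for `β ≥ 1`, `RS(𝒯) ≥ β + 1` iff there are pairwise inconsistent sentences `φ_n`, `n ∈ ℕ`,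
with `RS(𝒯_{φ_n}) ≥ β` for all `n`; for limit `λ`, `RS(𝒯) ≥ λ` iff `RS(𝒯) ≥ β` for all
`β < λ`. -/
noncomputable def RSge (α : Ordinal.{w}) : Set (CTheory L) → Prop :=
  @Ordinal.limitRecOn (fun _ => Set (CTheory L) → Prop) α
    (fun 𝒯 => 𝒯.Nonempty)
    (fun β ih 𝒯 =>
      if β = 0 then 𝒯.Infinite
      else ∃ φ : ℕ → L.Sentence,
        (∀ m n : ℕ, m ≠ n → Inconsistent (φ m) (φ n)) ∧ ∀ k : ℕ, ih (nbhd 𝒯 (φ k)))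
    (fun β _ ih 𝒯 => ∀ γ : Ordinal, ∀ h : γ < β, ih γ h 𝒯)

/-- `RS(𝒯) = α` for an ordinal `α`: `RS(𝒯) ≥ α` but not `RS(𝒯) ≥ α + 1`. -/
def RSeq (𝒯 : Set (CTheory L)) (α : Ordinal.{w}) : Prop :=
  RSge α 𝒯 ∧ ¬ RSge (α + 1) 𝒯

/-- `RS(𝒯) = ∞`: `RS(𝒯) ≥ α` for every ordinal `α`. -/
def RSinf (𝒯 : Set (CTheory L)) : Prop :=
  ∀ α : Ordinal.{w}, RSge α 𝒯

/-- `ds(𝒯) = n` (relative to `RS(𝒯) = α`): `n` is the largest natural number for which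
there exist `n` pairwise inconsistent sentences `φ_1, …, φ_n` with `RS(𝒯_{φ_i}) = α`. -/
def dsEq (𝒯 : Set (CTheory L)) (α : Ordinal.{w}) (n : ℕ) : Prop :=
  IsGreatest {m : ℕ | ∃ φ : Fin m → L.Sentence,
    (∀ i j : Fin m, i ≠ j → Inconsistent (φ i) (φ j)) ∧
    ∀ i : Fin m, RSeq (nbhd 𝒯 (φ i)) α} n

/-- `𝒯` is `e`-minimal: for every sentence `φ`, `𝒯_φ` is finite or `𝒯_{¬φ}` is finite. -/
def EMinimal (𝒯 : Set (CTheory L)) : Prop :=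
  ∀ φ : L.Sentence, (nbhd 𝒯 φ).Finite ∨ (nbhd 𝒯 φ.not).Finite

/-- `𝒯` is `a`-minimal: `𝒯` has infinitely many accumulation points and for every sentence
`φ`, `𝒯_φ` or `𝒯_{¬φ}` has only finitely many accumulation points. -/
def AMinimal (𝒯 : Set (CTheory L)) : Prop :=
  {T : CTheory L | IsAccPoint 𝒯 T}.Infinite ∧
  ∀ φ : L.Sentence,
    {T : CTheory L | IsAccPoint (nbhd 𝒯 φ) T}.Finite ∨
    {T : CTheory L | IsAccPoint (nbhd 𝒯 φ.not) T}.Finite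

/-- `𝒯` is `α`-minimal: `RS(𝒯) = α` and for every sentence `φ`, `RS(𝒯_φ) < α` or
`RS(𝒯_{¬φ}) < α`. -/
def AlphaMinimal (𝒯 : Set (CTheory L)) (α : Ordinal.{w}) : Prop :=
  RSeq 𝒯 α ∧
  ∀ φ : L.Sentence, ¬ RSge α (nbhd 𝒯 φ) ∨ ¬ RSge α (nbhd 𝒯 φ.not)

-- basic lemmas
lemma nbhd_subset (𝒮 : Set (CTheory L)) (φ : L.Sentence) : nbhd 𝒮 φ ⊆ 𝒮 := fun _ hT => hT.1

lemma nbhd_mono {𝒮 𝒯 : Set (CTheory L)} (h : 𝒮 ⊆ 𝒯) (φ : L.Sentence) :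
    nbhd 𝒮 φ ⊆ nbhd 𝒯 φ := fun T hT => ⟨h hT.1, hT.2⟩

lemma RSge_zero (𝒮 : Set (CTheory L)) : RSge (0 : Ordinal.{w}) 𝒮 ↔ 𝒮.Nonempty := by
  simp only [RSge, Ordinal.limitRecOn_zero]

lemma RSge_succ_zero (𝒮 : Set (CTheory L)) :
    RSge (Order.succ (0 : Ordinal.{w})) 𝒮 ↔ 𝒮.Infinite := by
  simp only [RSge, Ordinal.limitRecOn_succ, if_true]

lemma RSge_succ_of_ne {β : Ordinal.{w}} (hβ : β ≠ 0) (𝒮 : Set (CTheory L)) :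
    RSge (Order.succ β) 𝒮 ↔ ∃ φ : ℕ → L.Sentence,
      (∀ m n : ℕ, m ≠ n → Inconsistent (φ m) (φ n)) ∧ ∀ k : ℕ, RSge β (nbhd 𝒮 (φ k)) := by
  simp only [RSge, Ordinal.limitRecOn_succ, if_neg hβ]

lemma RSge_limit {lam : Ordinal.{w}} (hlim : Order.IsSuccLimit lam) (𝒮 : Set (CTheory L)) :
    RSge lam 𝒮 ↔ ∀ γ < lam, RSge γ 𝒮 := by
  simp only [RSge]
  rw [Ordinal.limitRecOn_limit _ _ _ _ hlim]

/-! CTheory basics -/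

lemma CTheory.sat_of_subset (T : CTheory L) {Γ : L.Theory} (h : Γ ⊆ T.1) : Γ.IsSatisfiable :=
  T.2.1.mono h

lemma CTheory.consistent_pair (T : CTheory L) {φ ψ : L.Sentence} (hφ : φ ∈ T.1) (hψ : ψ ∈ T.1) :
    ¬ Inconsistent φ ψ := fun hc =>
  hc (T.sat_of_subset (by intro x hx; rcases hx with rfl | rfl; exacts [hφ, hψ]))

lemma CTheory.not_mem_not (T : CTheory L) {φ : L.Sentence} (hφ : φ ∈ T.1)
    (hφ' : φ.not ∈ T.1) : False := by
  obtain ⟨M⟩ := T.2.1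
  have h1 : M ⊨ φ := Theory.realize_sentence_of_mem T.1 hφ
  have h2 : M ⊨ φ.not := Theory.realize_sentence_of_mem T.1 hφ'
  rw [Sentence.realize_not] at h2
  exact h2 h1

lemma CTheory.mem_not_of_not_mem (T : CTheory L) {φ : L.Sentence} (hφ : φ ∉ T.1) :
    φ.not ∈ T.1 := (T.2.2 φ).resolve_left hφ

lemma CTheory.top_mem (T : CTheory L) : (⊤ : L.Sentence) ∈ T.1 := by
  refine (T.2.2 ⊤).resolve_right fun hc => ?_
  obtain ⟨M⟩ := T.2.1
  have h2 : M ⊨ (⊤ : L.Sentence).not := Theory.realize_sentence_of_mem T.1 hc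
  rw [Sentence.realize_not] at h2
  exact h2 (by simp [Sentence.Realize])

lemma CTheory.inf_mem_iff (T : CTheory L) {φ ψ : L.Sentence} :
    φ ⊓ ψ ∈ T.1 ↔ φ ∈ T.1 ∧ ψ ∈ T.1 := by
  constructor
  · intro hm
    constructor <;> refine T.2.mem_of_models (Theory.models_sentence_iff.2 fun M => ?_) <;>
    · have := Theory.realize_sentence_of_mem (M := M) T.1 hm
      simp only [Sentence.Realize, Formula.realize_inf] at this
      first | exact this.1 | exact this.2
  · rintro ⟨h1, h2⟩
    refine T.2.mem_of_models (Theory.models_sentence_iff.2 fun M => ?_)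
    have e1 := Theory.realize_sentence_of_mem (M := M) T.1 h1
    have e2 := Theory.realize_sentence_of_mem (M := M) T.1 h2
    simp only [Sentence.Realize, Formula.realize_inf]
    exact ⟨e1, e2⟩

lemma inconsistent_inf_not {φ ψ χ : L.Sentence} :
    Inconsistent (φ ⊓ χ) (ψ ⊓ χ.not) := by
  rintro ⟨M⟩
  have h1 : M ⊨ φ ⊓ χ :=
    Theory.realize_sentence_of_mem ({φ ⊓ χ, ψ ⊓ χ.not} : L.Theory) (Set.mem_insert _ _)
  have h2 : M ⊨ ψ ⊓ χ.not :=
    Theory.realize_sentence_of_mem ({φ ⊓ χ, ψ ⊓ χ.not} : L.Theory)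
      (Set.mem_insert_of_mem _ rfl)
  simp only [Sentence.Realize, Formula.realize_inf, Formula.realize_not] at h1 h2
  exact h2.2 h1.2

/-! RSge monotonicity -/

lemma RSge_mono_set : ∀ (α : Ordinal.{w}) {𝒮 𝒯 : Set (CTheory L)},
    𝒮 ⊆ 𝒯 → RSge α 𝒮 → RSge α 𝒯 := by
  intro α
  induction α using Ordinal.induction with
  | h α IH =>
    intro 𝒮 𝒯 hsub h
    rcases Ordinal.zero_or_succ_or_isSuccLimit α with rfl | ⟨β, rfl⟩ | hlim
    · rw [RSge_zero] at *; exact h.mono hsub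
    · rcases eq_or_ne β 0 with rfl | hβ
      · rw [RSge_succ_zero] at *; exact h.mono hsub
      · rw [RSge_succ_of_ne hβ] at *
        obtain ⟨φ, hinc, hk⟩ := h
        exact ⟨φ, hinc, fun k =>
          IH β (Order.lt_succ β) (nbhd_mono hsub (φ k)) (hk k)⟩
    · rw [RSge_limit hlim] at *
      exact fun γ hγ => IH γ hγ hsub (h γ hγ)

lemma RSge_mono_ord : ∀ (β : Ordinal.{w}) (α : Ordinal.{w}), α ≤ β →
    ∀ {𝒮 : Set (CTheory L)}, RSge β 𝒮 → RSge α 𝒮 := by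
  intro β
  induction β using Ordinal.induction with
  | h β IH =>
    intro α hle 𝒮 h
    rcases eq_or_lt_of_le hle with rfl | hlt
    · exact h
    rcases Ordinal.zero_or_succ_or_isSuccLimit β with rfl | ⟨γ, rfl⟩ | hlim
    · exact absurd hlt (not_lt_zero (a := α))
    · have hαγ : α ≤ γ := Order.lt_succ_iff.mp hlt
      have hγ : RSge γ 𝒮 := by
        rcases eq_or_ne γ 0 with rfl | hγ0
        · rw [RSge_succ_zero] at h
          rw [RSge_zero]; exact h.nonempty
        · rw [RSge_succ_of_ne hγ0] at h
          obtain ⟨φ, hinc, hk⟩ := h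
          exact RSge_mono_set γ (nbhd_subset 𝒮 (φ 0)) (hk 0)
      exact IH γ (Order.lt_succ γ) α hαγ hγ
    · rw [RSge_limit hlim] at h
      exact h α hlt

/-! Accumulation points -/

lemma IsAccPoint.mono {𝒮 𝒯 : Set (CTheory L)} {T : CTheory L} (hsub : 𝒮 ⊆ 𝒯)
    (h : IsAccPoint 𝒮 T) : IsAccPoint 𝒯 T :=
  fun φ hφ => (h φ hφ).mono (nbhd_mono hsub φ)

lemma infinite_nbhd_of_acc_mem {𝒮 : Set (CTheory L)} {V : CTheory L}
    (hV : IsAccPoint 𝒮 V) {χ : L.Sentence} (hχ : χ ∈ V.1) : (nbhd 𝒮 χ).Infinite := hV χ hχ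

lemma subset_ClE (𝒮 : Set (CTheory L)) : 𝒮 ⊆ ClE 𝒮 := fun _ h => Or.inl h

lemma ClE_mono {𝒮 𝒯 : Set (CTheory L)} (h : 𝒮 ⊆ 𝒯) : ClE 𝒮 ⊆ ClE 𝒯 := by
  rintro T (hT | hT)
  · exact Or.inl (h hT)
  · exact Or.inr (hT.mono h)

def EClosed (S : Set (CTheory L)) : Prop := ∀ T, IsAccPoint S T → T ∈ S

lemma acc_ClE {𝒮 : Set (CTheory L)} {T : CTheory L} (h : IsAccPoint (ClE 𝒮) T) :
    IsAccPoint 𝒮 T := by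
  intro χ hχ
  by_cases hc : ∃ V, IsAccPoint 𝒮 V ∧ χ ∈ V.1
  · obtain ⟨V, hV, hVχ⟩ := hc
    exact infinite_nbhd_of_acc_mem hV hVχ
  · refine ((h χ hχ).mono ?_)
    rintro T' ⟨hT' | hT', hT'χ⟩
    · exact ⟨hT', hT'χ⟩
    · exact absurd ⟨T', hT', hT'χ⟩ hc

lemma eclosed_ClE (𝒮 : Set (CTheory L)) : EClosed (ClE 𝒮) := fun _ h => Or.inr (acc_ClE h)

lemma eclosed_inter_acc {S : Set (CTheory L)} (hS : EClosed S) :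
    EClosed (S ∩ {T | IsAccPoint S T}) := by
  intro T h
  have h' : IsAccPoint S T := h.mono inter_subset_left
  exact ⟨hS T h', h'⟩

lemma eclosed_iInter {ι : Sort*} {f : ι → Set (CTheory L)} (hf : ∀ i, EClosed (f i)) :
    EClosed (⋂ i, f i) := fun T h =>
  Set.mem_iInter.2 fun i => hf i T (h.mono (Set.iInter_subset f i))

lemma mem_of_acc_of_eclosed {S : Set (CTheory L)} (hS : EClosed S) {T : CTheory L}
    (h : IsAccPoint S T) : T ∈ S := hS T h

/-! The derivative hierarchy -/

noncomputable def derivSet (𝒮 : Set (CTheory L)) (α : Ordinal.{w}) : Set (CTheory L) :=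
  @Ordinal.limitRecOn (fun _ => Set (CTheory L)) α (ClE 𝒮)
    (fun _ ih => ih ∩ {T | IsAccPoint ih T})
    (fun β _ ih => ⋂ (γ : Ordinal.{w}), ⋂ (h : γ < β), ih γ h)

lemma derivSet_zero (𝒮 : Set (CTheory L)) : derivSet 𝒮 (0 : Ordinal.{w}) = ClE 𝒮 := by
  simp only [derivSet, Ordinal.limitRecOn_zero]

lemma derivSet_succ (𝒮 : Set (CTheory L)) (β : Ordinal.{w}) :
    derivSet 𝒮 (Order.succ β) =
      derivSet 𝒮 β ∩ {T | IsAccPoint (derivSet 𝒮 β) T} := by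
  simp only [derivSet, Ordinal.limitRecOn_succ]

lemma derivSet_limit (𝒮 : Set (CTheory L)) {lam : Ordinal.{w}} (hlim : Order.IsSuccLimit lam) :
    derivSet 𝒮 lam = ⋂ (γ : Ordinal.{w}), ⋂ (_ : γ < lam), derivSet 𝒮 γ := by
  simp only [derivSet]
  rw [Ordinal.limitRecOn_limit _ _ _ _ hlim]

lemma derivSet_anti (𝒮 : Set (CTheory L)) : ∀ (β α : Ordinal.{w}), α ≤ β →
    derivSet 𝒮 β ⊆ derivSet 𝒮 α := by
  intro β
  induction β using Ordinal.induction with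
  | h β IH =>
    intro α hle
    rcases eq_or_lt_of_le hle with rfl | hlt
    · exact le_rfl
    rcases Ordinal.zero_or_succ_or_isSuccLimit β with rfl | ⟨γ, rfl⟩ | hlim
    · exact absurd hlt (not_lt_zero (a := α))
    · rw [derivSet_succ]
      exact inter_subset_left.trans (IH γ (Order.lt_succ γ) α (Order.lt_succ_iff.mp hlt))
    · rw [derivSet_limit 𝒮 hlim]
      exact fun T hT => by
        have := Set.mem_iInter.1 hT α
        exact Set.mem_iInter.1 this hlt

lemma eclosed_derivSet (𝒮 : Set (CTheory L)) : ∀ β : Ordinal.{w}, EClosed (derivSet 𝒮 β) := by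
  intro β
  induction β using Ordinal.induction with
  | h β IH =>
    rcases Ordinal.zero_or_succ_or_isSuccLimit β with rfl | ⟨γ, rfl⟩ | hlim
    · rw [derivSet_zero]; exact eclosed_ClE 𝒮
    · rw [derivSet_succ]; exact eclosed_inter_acc (IH γ (Order.lt_succ γ))
    · rw [derivSet_limit 𝒮 hlim]
      exact fun T h => Set.mem_iInter.2 fun γ => Set.mem_iInter.2 fun hγ =>
        IH γ hγ T (h.mono (fun x hx => by
          have := Set.mem_iInter.1 hx γ; exact Set.mem_iInter.1 this hγ))

lemma derivSet_subset_ClE (𝒮 : Set (CTheory L)) (β : Ordinal.{w}) :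
    derivSet 𝒮 β ⊆ ClE 𝒮 := by
  have := derivSet_anti 𝒮 β 0 (zero_le (a := β))
  rwa [derivSet_zero] at this

lemma derivSet_mono_set {𝒮 𝒯 : Set (CTheory L)} (hsub : 𝒮 ⊆ 𝒯) :
    ∀ β : Ordinal.{w}, derivSet 𝒮 β ⊆ derivSet 𝒯 β := by
  intro β
  induction β using Ordinal.induction with
  | h β IH =>
    rcases Ordinal.zero_or_succ_or_isSuccLimit β with rfl | ⟨γ, rfl⟩ | hlim
    · rw [derivSet_zero, derivSet_zero]; exact ClE_mono hsub
    · rw [derivSet_succ, derivSet_succ]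
      rintro T ⟨h1, h2⟩
      exact ⟨IH γ (Order.lt_succ γ) h1, h2.mono (IH γ (Order.lt_succ γ))⟩
    · rw [derivSet_limit 𝒮 hlim, derivSet_limit 𝒯 hlim]
      intro T hT
      exact Set.mem_iInter.2 fun γ => Set.mem_iInter.2 fun hγ =>
        IH γ hγ (Set.mem_iInter.1 (Set.mem_iInter.1 hT γ) hγ)

/-! Ultrafilter limits of complete theories -/

noncomputable def ulim {ι : Type*} (U : Ultrafilter ι) (f : ι → CTheory L) : CTheory L :=
  ⟨{φ | {i | φ ∈ (f i).1} ∈ U}, by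
    constructor
    · rw [Theory.isSatisfiable_iff_isFinitelySatisfiable]
      intro T0 hT0
      have hA : (⋂ φ ∈ T0, {i | (φ : L.Sentence) ∈ (f i).1}) ∈ U := by
        refine (Filter.biInter_mem T0.finite_toSet).2 fun φ hφ => ?_
        exact hT0 hφ
      obtain ⟨i, hi⟩ := U.nonempty_of_mem hA
      refine (f i).2.1.mono fun φ hφ => ?_
      exact Set.mem_iInter₂.1 hi φ hφ
    · intro φ
      have hu : ({i | φ ∈ (f i).1} ∪ {i | φ.not ∈ (f i).1}) ∈ U :=
        Filter.mem_of_superset Filter.univ_mem fun i _ => (f i).2.2 φ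
      exact (Ultrafilter.union_mem_iff.mp hu).imp id id⟩

lemma mem_ulim {ι : Type*} {U : Ultrafilter ι} {f : ι → CTheory L} {φ : L.Sentence} :
    φ ∈ (ulim U f).1 ↔ {i | φ ∈ (f i).1} ∈ U := Iff.rfl

lemma mem_of_mem_ClE_nbhd {𝒮 : Set (CTheory L)} {φ : L.Sentence} {T : CTheory L}
    (h : T ∈ ClE (nbhd 𝒮 φ)) : φ ∈ T.1 := by
  rcases h with h | h
  · exact h.2
  · by_contra hφ
    have hnot : φ.not ∈ T.1 := T.mem_not_of_not_mem hφ
    obtain ⟨V, hV⟩ := (h φ.not hnot).nonempty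
    exact V.not_mem_not hV.1.2 hV.2

lemma ultrafilter_cofinite_infinite {A : Set ℕ} (hA : A ∈ Ultrafilter.of (Filter.cofinite : Filter ℕ)) :
    A.Infinite := by
  intro hfin
  have h1 : Aᶜ ∈ (Filter.cofinite : Filter ℕ) := by
    rw [Filter.mem_cofinite]; simpa using hfin
  have h2 : Aᶜ ∈ Ultrafilter.of (Filter.cofinite : Filter ℕ) :=
    Ultrafilter.of_le Filter.cofinite h1
  have := (Ultrafilter.of (Filter.cofinite : Filter ℕ)).nonempty_of_mem
    (Filter.inter_mem hA h2)
  simp at this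

lemma derivSet_nonempty : ∀ (β : Ordinal.{w}) (𝒮 : Set (CTheory L)),
    RSge (β + 1) 𝒮 → (derivSet 𝒮 β).Nonempty := by
  intro β
  induction β using Ordinal.induction with
  | h β IH =>
    intro 𝒮 h
    rw [Ordinal.add_one_eq_succ] at h
    rcases Ordinal.zero_or_succ_or_isSuccLimit β with rfl | ⟨γ, rfl⟩ | hlim
    · rw [RSge_succ_zero] at h
      rw [derivSet_zero]
      exact h.nonempty.mono (subset_ClE 𝒮)
    · -- successor case
      rw [RSge_succ_of_ne (Order.succ_ne_bot γ)] at h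
      obtain ⟨φ, hinc, hk⟩ := h
      have hne : ∀ k : ℕ, (derivSet (nbhd 𝒮 (φ k)) γ).Nonempty := fun k =>
        IH γ (Order.lt_succ γ) (nbhd 𝒮 (φ k)) (by rw [Ordinal.add_one_eq_succ]; exact hk k)
      choose T hT using hne
      have hTφ : ∀ k, φ k ∈ (T k).1 := fun k =>
        mem_of_mem_ClE_nbhd (derivSet_subset_ClE _ γ (hT k))
      have hTd : ∀ k, T k ∈ derivSet 𝒮 γ := fun k =>
        derivSet_mono_set (nbhd_subset 𝒮 (φ k)) γ (hT k)
      have hinj : Function.Injective T := by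
        intro m n hmn
        by_contra hne'
        exact (T m).consistent_pair (hTφ m) (hmn ▸ hTφ n) (hinc m n hne')
      set U : Ultrafilter ℕ := Ultrafilter.of Filter.cofinite with hU
      set Tl := ulim U T with hTl
      have hacc : IsAccPoint (derivSet 𝒮 γ) Tl := by
        intro χ hχ
        have hAU : {k | χ ∈ (T k).1} ∈ U := hχ
        have hAinf : ({k | χ ∈ (T k).1} : Set ℕ).Infinite := ultrafilter_cofinite_infinite hAU
        refine ((hAinf.image hinj.injOn).mono ?_)
        rintro x ⟨k, hk1, rfl⟩
        exact ⟨hTd k, hk1⟩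
      have hmem : Tl ∈ derivSet 𝒮 γ := eclosed_derivSet 𝒮 γ Tl hacc
      rw [derivSet_succ]
      exact ⟨Tl, hmem, hacc⟩
    · -- limit case
      have hne : ∀ b : ↥(Set.Iio β), (derivSet 𝒮 b.1).Nonempty := by
        rintro ⟨b, hb⟩
        refine IH b hb 𝒮 (RSge_mono_ord β (b + 1) ?_ (RSge_mono_ord (Order.succ β) β (Order.le_succ β) h))
        rw [Ordinal.add_one_eq_succ]
        exact Order.succ_le_of_lt hb
      choose T hT using hne
      haveI : Nonempty ↥(Set.Iio β) := ⟨⟨0, hlim.pos⟩⟩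
      set U : Ultrafilter ↥(Set.Iio β) := Ultrafilter.of Filter.atTop with hU
      set Tl := ulim U T with hTl
      have key : ∀ γ : Ordinal.{w}, γ < β → Tl ∈ derivSet 𝒮 γ := by
        intro γ hγ
        have hsγ : Order.succ γ < β := hlim.succ_lt hγ
        refine eclosed_derivSet 𝒮 γ Tl ?_
        intro χ hχ
        have hAU : {b : ↥(Set.Iio β) | χ ∈ (T b).1} ∈ U := hχ
        have hBU : {b : ↥(Set.Iio β) | (⟨Order.succ γ, hsγ⟩ : ↥(Set.Iio β)) ≤ b} ∈ U :=
          Ultrafilter.of_le Filter.atTop (Filter.mem_atTop _)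
        obtain ⟨b, hbA, hbB⟩ := U.nonempty_of_mem (Filter.inter_mem hAU hBU)
        have hTb : T b ∈ derivSet 𝒮 (Order.succ γ) :=
          derivSet_anti 𝒮 b.1 (Order.succ γ) hbB (hT b)
        rw [derivSet_succ] at hTb
        exact infinite_nbhd_of_acc_mem hTb.2 hbA
      rw [derivSet_limit 𝒮 hlim]
      exact ⟨Tl, Set.mem_iInter.2 fun γ => Set.mem_iInter.2 fun hγ => key γ hγ⟩

/-! Perfect sets give continuum many accumulation points -/

section Perfect

variable (P : Set (CTheory L))

noncomputable def nodeSen (htop : (nbhd P (⊤ : L.Sentence)).Nonempty)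
    (key : ∀ ψ : L.Sentence, (nbhd P ψ).Nonempty → L.Sentence)
    (hkey : ∀ ψ h, (nbhd P (ψ ⊓ key ψ h)).Nonempty ∧ (nbhd P (ψ ⊓ (key ψ h).not)).Nonempty) :
    List Bool → {ψ : L.Sentence // (nbhd P ψ).Nonempty}
  | [] => ⟨⊤, htop⟩
  | b :: s =>
    let n := nodeSen htop key hkey s
    if b then ⟨n.1 ⊓ key n.1 n.2, (hkey n.1 n.2).1⟩
    else ⟨n.1 ⊓ (key n.1 n.2).not, (hkey n.1 n.2).2⟩

variable {P}
variable (htop : (nbhd P (⊤ : L.Sentence)).Nonempty)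
    (key : ∀ ψ : L.Sentence, (nbhd P ψ).Nonempty → L.Sentence)
    (hkey : ∀ ψ h, (nbhd P (ψ ⊓ key ψ h)).Nonempty ∧ (nbhd P (ψ ⊓ (key ψ h).not)).Nonempty)

lemma nodeSen_cons_mem (b : Bool) (s : List Bool) (T : CTheory L)
    (h : (nodeSen P htop key hkey (b :: s)).1 ∈ T.1) :
    (nodeSen P htop key hkey s).1 ∈ T.1 := by
  cases b <;>
  · simp only [nodeSen] at h
    exact (T.inf_mem_iff.1 h).1

lemma nodeSen_incon (s : List Bool) :
    Inconsistent (nodeSen P htop key hkey (true :: s)).1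
      (nodeSen P htop key hkey (false :: s)).1 := by
  simp only [nodeSen]
  exact inconsistent_inf_not

end Perfect

lemma exists_sep (T T' : CTheory L) (h : T ≠ T') : ∃ χ, χ ∈ T.1 ∧ χ.not ∈ T'.1 := by
  by_contra hc
  push_neg at hc
  refine h (Subtype.ext (Set.ext fun χ => ⟨fun hχ => ?_, fun hχ => ?_⟩))
  · exact (T'.2.2 χ).resolve_right (hc χ hχ)
  · by_contra hn
    have h1 : χ.not ∈ T.1 := T.mem_not_of_not_mem hn
    have h2 : χ.not.not ∉ T'.1 := hc χ.not h1
    have h3 : χ.not ∉ T'.1 := fun hx => T'.not_mem_not hχ hx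
    exact h2 ((T'.2.2 χ.not).resolve_left h3)

lemma exists_continuum_acc {P : Set (CTheory L)} (hne : P.Nonempty)
    (hperf : ∀ T ∈ P, IsAccPoint P T) :
    ∃ g : (ℕ → Bool) → CTheory L, Function.Injective g ∧ ∀ b, IsAccPoint P (g b) := by
  classical
  obtain ⟨T0, hT0⟩ := hne
  have htop : (nbhd P (⊤ : L.Sentence)).Nonempty := ⟨T0, hT0, T0.top_mem⟩
  have keyEx : ∀ ψ : L.Sentence, (nbhd P ψ).Nonempty →
      ∃ χ, (nbhd P (ψ ⊓ χ)).Nonempty ∧ (nbhd P (ψ ⊓ χ.not)).Nonempty := by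
    intro ψ hψ
    obtain ⟨T, hT⟩ := hψ
    have hinf : (nbhd P ψ).Infinite := infinite_nbhd_of_acc_mem (hperf T hT.1) hT.2
    obtain ⟨A, hA, B, hB, hAB⟩ := hinf.nontrivial
    obtain ⟨χ, hχA, hχB⟩ := exists_sep A B hAB
    refine ⟨χ, ⟨A, hA.1, A.inf_mem_iff.2 ⟨hA.2, hχA⟩⟩,
      ⟨B, hB.1, B.inf_mem_iff.2 ⟨hB.2, hχB⟩⟩⟩
  set key : ∀ ψ : L.Sentence, (nbhd P ψ).Nonempty → L.Sentence :=
    fun ψ h => Classical.choose (keyEx ψ h) with hkeydef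
  have hkey : ∀ ψ h, (nbhd P (ψ ⊓ key ψ h)).Nonempty ∧
      (nbhd P (ψ ⊓ (key ψ h).not)).Nonempty := fun ψ h => Classical.choose_spec (keyEx ψ h)
  set node : List Bool → {ψ : L.Sentence // (nbhd P ψ).Nonempty} :=
    nodeSen P htop key hkey with hnodedef
  -- finite branches
  set t : (ℕ → Bool) → ℕ → List Bool :=
    fun b n => Nat.rec [] (fun k ih => b k :: ih) n with htdef
  have ht_succ : ∀ b n, t b (n + 1) = b n :: t b n := fun b n => rfl
  have ht_agree : ∀ (b b' : ℕ → Bool) (n : ℕ), (∀ m < n, b m = b' m) → t b n = t b' n := by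
    intro b b' n
    induction n with
    | zero => intro _; rfl
    | succ k IH =>
      intro hm
      rw [ht_succ, ht_succ, hm k (Nat.lt_succ_self k),
        IH fun m hmk => hm m (hmk.trans (Nat.lt_succ_self k))]
  have hchain : ∀ (b : ℕ → Bool) (n k : ℕ), n ≤ k → ∀ T : CTheory L,
      (node (t b k)).1 ∈ T.1 → (node (t b n)).1 ∈ T.1 := by
    intro b n k hnk
    induction k, hnk using Nat.le_induction with
    | base => exact fun T hT => hT
    | succ k hk IH =>
      intro T hT
      rw [ht_succ] at hT
      exact IH T (nodeSen_cons_mem htop key hkey (b k) (t b k) T hT)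
  -- choose witnesses along branches
  set S : (ℕ → Bool) → ℕ → CTheory L := fun b n => (node (t b n)).2.some with hSdef
  have hS : ∀ b n, S b n ∈ nbhd P (node (t b n)).1 := fun b n => (node (t b n)).2.some_mem
  set U : Ultrafilter ℕ := Ultrafilter.of Filter.cofinite with hUdef
  refine ⟨fun b => ulim U (S b), ?_, ?_⟩
  · -- injectivity
    intro b b' hbb'
    by_contra hne'
    have hx : ∃ n, b n ≠ b' n := by
      by_contra hz; push_neg at hz; exact hne' (funext hz)
    set n := Nat.find hx with hndef
    have hminlt : ∀ m < n, b m = b' m := fun m hm => by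
      by_contra hmb; exact Nat.find_min hx hm hmb
    have hteq : t b n = t b' n := ht_agree b b' n hminlt
    have hmem : ∀ (c : ℕ → Bool), (node (t c (n+1))).1 ∈ (ulim U (S c)).1 := by
      intro c
      rw [mem_ulim]
      refine Ultrafilter.of_le Filter.cofinite ?_
      rw [Filter.mem_cofinite]
      refine (Set.finite_lt_nat (n+1)).subset ?_
      intro k hk
      simp only [Set.mem_compl_iff, Set.mem_setOf_eq, not_lt] at hk ⊢
      by_contra hlt
      push_neg at hlt
      exact hk (hchain c (n+1) k hlt (S c k) (hS c k).2)
    have hbb2 : ulim U (S b) = ulim U (S b') := hbb'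
    have h1 := hmem b
    have h2 := hmem b'
    rw [hbb2] at h1
    rw [ht_succ, hteq] at h1
    rw [ht_succ] at h2
    have hne2 : b n ≠ b' n := Nat.find_spec hx
    have : False := by
      cases hbn : b n with
      | true =>
        have hb'n : b' n = false := by
          cases h' : b' n
          · rfl
          · exact absurd (hbn.trans h'.symm) hne2
        rw [hbn] at h1; rw [hb'n] at h2
        exact (ulim U (S b')).consistent_pair h1 h2
          (nodeSen_incon htop key hkey (t b' n))
      | false =>
        have hb'n : b' n = true := by
          cases h' : b' n
          · exact absurd (hbn.trans h'.symm) hne2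
          · rfl
        rw [hbn] at h1; rw [hb'n] at h2
        exact (ulim U (S b')).consistent_pair h2 h1
          (nodeSen_incon htop key hkey (t b' n))
    exact this
  · -- each branch limit is an accumulation point of P
    intro b χ hχ
    obtain ⟨n, hn⟩ := U.nonempty_of_mem (hχ : {k | χ ∈ (S b k).1} ∈ U)
    exact infinite_nbhd_of_acc_mem (hperf (S b n) (hS b n).1) hn

/-- Proposition 4.1: if `RS(𝒯) = ∞` then `|Cl_E(𝒯)| ≥ 2^ℵ₀`. -/
theorem continuum_le_clE_of_rank_infty (𝒯 : Set (CTheory L)) (h : (∀ α : Ordinal.{w}, RSge α 𝒯)) :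
    (2 : Cardinal) ^ Cardinal.aleph0 ≤ Cardinal.mk ↥(ClE 𝒯) := by
  rw [Cardinal.two_power_aleph0]
  by_cases hP : ∃ β : Ordinal.{w}, derivSet 𝒯 β ⊆ {T | IsAccPoint (derivSet 𝒯 β) T}
  · -- perfect kernel case
    obtain ⟨β, hβ⟩ := hP
    have hne : (derivSet 𝒯 β).Nonempty := derivSet_nonempty β 𝒯 (h (β + 1))
    obtain ⟨g, hginj, hgacc⟩ := exists_continuum_acc hne fun T hT => hβ hT
    have hg : ∀ b, g b ∈ ClE 𝒯 := fun b =>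
      derivSet_subset_ClE 𝒯 β (eclosed_derivSet 𝒯 β (g b) (hgacc b))
    have hemb : Nonempty ((ℕ → Bool) ↪ ↥(ClE 𝒯)) :=
      ⟨⟨fun b => ⟨g b, hg b⟩, fun b b' hbb' => hginj (by injection hbb')⟩⟩
    have hle := Cardinal.lift_mk_le'.2 hemb
    have hmk : #(ℕ → Bool) = Cardinal.continuum := by
      rw [← Cardinal.power_def, Cardinal.mk_bool, Cardinal.mk_nat, Cardinal.two_power_aleph0]
    rw [hmk, Cardinal.lift_continuum] at hle
    rwa [Cardinal.continuum_le_lift] at hle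
  · -- strictly decreasing case
    push_neg at hP
    choose x hx1 hx2 using fun β : Ordinal.{w} => Set.not_subset.1 (hP β)
    have key : ∀ a b : Ordinal.{w}, a < b → x a ≠ x b := by
      intro a b hab heq
      have h1 : x b ∈ derivSet 𝒯 (Order.succ a) :=
        derivSet_anti 𝒯 b (Order.succ a) (Order.succ_le_of_lt hab) (hx1 b)
      rw [derivSet_succ] at h1
      exact hx2 a (heq ▸ h1.2)
    have hyinj : Function.Injective
        (fun c : Cardinal.{w} => (⟨x c.ord, derivSet_subset_ClE 𝒯 _ (hx1 c.ord)⟩ : ↥(ClE 𝒯))) := by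
      intro c c' hcc'
      have hx : x c.ord = x c'.ord := by injection hcc'
      by_contra hne'
      rcases lt_or_gt_of_ne (fun e => hne' (Cardinal.ord_injective e) :
        c.ord ≠ c'.ord) with hlt | hlt
      · exact key _ _ hlt hx
      · exact key _ _ hlt hx.symm
    have hemb : Nonempty (Cardinal.{w} ↪ ↥(ClE 𝒯)) := ⟨⟨_, hyinj⟩⟩
    have hle := Cardinal.lift_mk_le'.2 hemb
    rw [Cardinal.mk_cardinal, Cardinal.lift_univ] at hle
    have hcu : (Cardinal.continuum : Cardinal.{max (w + 1) (max u v)}) ≤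
        Cardinal.univ.{w, max (w + 1) (max u v)} := by
      have := (Cardinal.lift_lt_univ'.{w, max (w + 1) (max u v)} Cardinal.continuum).le
      rwa [Cardinal.lift_continuum] at this
    have := hcu.trans hle
    rwa [Cardinal.continuum_le_lift] at this
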